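/- Fix an integer M ≥ 1 and ε > 0, and let p_W be a pmf with full support on a set W of size M. Then there exists a conditional pmf P_{X|W} from W to an alphabet X of size M such that the M×M stochastic matrix (P_{X|W}(x|w))_{x,w} has rank M, and the mutual information I(X;W) < ε, where (W,X) has joint pmf p_W(w)·P_{X|W}(x|w). -/

import Mathlib

open Finset

/-- A probability mass function on a finite alphabet. -/
def IsPMF {α : Type*} [Fintype α] (p : α → ℝ) : Prop :=
  (∀ a, 0 ≤ p a) ∧ ∑ a, p a = 1

/-- Shannon entropy in bits. -/
noncomputable def ent {α : Type*} [Fintype α] (p : α → ℝ) : ℝ :=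
  -∑ a, p a * Real.logb 2 (p a)

lemma cont_ent {α : Type*} [Fintype α] {f : ℝ → α → ℝ}
    (hf : ∀ a, Continuous fun δ => f δ a) : Continuous fun δ => ent (f δ) := by
  have h : ∀ a : α, Continuous fun δ => f δ a * Real.logb 2 (f δ a) := by
    intro a
    have := (Real.continuous_mul_log.comp (hf a)).div_const (Real.log 2)
    simpa [Real.logb, mul_div_assoc] using this
  unfold ent
  exact (continuous_finset_sum univ (fun a _ => h a)).neg

/-- for any full-support `p_W` on an alphabet of size `M` and any `ε > 0`,
there is a conditional pmf `P_{X|W}` whose `M × M` stochastic matrix has full rank `M`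
while `I(X;W) = H(X) + H(W) - H(X,W) < ε`. -/
theorem stmt3 (M : ℕ) (hM : 1 ≤ M) (ε : ℝ) (hε : 0 < ε)
    (pW : Fin M → ℝ) (hpW : IsPMF pW) (hfull : ∀ w, 0 < pW w) :
    ∃ P : Fin M → Fin M → ℝ,
      (∀ w, IsPMF (P w)) ∧
      (Matrix.of fun x w : Fin M => P w x).rank = M ∧
      ent (fun x => ∑ w, pW w * P w x) + ent pW
        - ent (fun wx : Fin M × Fin M => pW wx.1 * P wx.1 wx.2) < ε := by
  have hM0 : (M:ℝ) ≠ 0 := Nat.cast_ne_zero.mpr (by omega)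
  have hMpos : (0:ℝ) < M := by positivity
  -- the family of channels
  set Q : ℝ → Fin M → Fin M → ℝ :=
    fun δ w x => (1-δ)/M + δ * (if x = w then 1 else 0) with hQ
  -- the mutual information as a function of δ
  set F : ℝ → ℝ := fun δ =>
    ent (fun x => ∑ w, pW w * Q δ w x) + ent pW
      - ent (fun wx : Fin M × Fin M => pW wx.1 * Q δ wx.1 wx.2) with hF
  have hFcont : Continuous F := by
    apply Continuous.sub
    · apply Continuous.add
      · apply cont_ent
        intro x
        apply continuous_finset_sum
        intro w _
        fun_prop
      · exact continuous_const
    · apply cont_ent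
      intro wx
      fun_prop
  have hF0 : F 0 = 0 := by
    have h1 : (fun x : Fin M => ∑ w, pW w * Q 0 w x) = fun _ => (M:ℝ)⁻¹ := by
      funext x
      simp only [hQ, sub_zero, zero_mul, add_zero, ← Finset.sum_mul]
      rw [hpW.2]; field_simp
    have h2 : (fun wx : Fin M × Fin M => pW wx.1 * Q 0 wx.1 wx.2)
        = fun wx : Fin M × Fin M => pW wx.1 * (M:ℝ)⁻¹ := by
      funext wx
      simp [hQ]
    have hq : ent (fun _ : Fin M => (M:ℝ)⁻¹) = Real.logb 2 M := by
      unfold ent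
      rw [Finset.sum_const, Finset.card_univ, Fintype.card_fin, Real.logb_inv]
      field_simp
      rw [nsmul_eq_mul, mul_neg, neg_neg, mul_div_cancel₀ _ hM0]
    have hj : ent (fun wx : Fin M × Fin M => pW wx.1 * (M:ℝ)⁻¹)
        = ent pW + Real.logb 2 M := by
      unfold ent
      rw [Fintype.sum_prod_type]
      have key : ∀ w : Fin M, ∑ _x : Fin M, (pW w * (M:ℝ)⁻¹) * Real.logb 2 (pW w * (M:ℝ)⁻¹)
          = pW w * Real.logb 2 (pW w) - pW w * Real.logb 2 M := by
        intro w
        rw [Finset.sum_const, Finset.card_univ, Fintype.card_fin,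
          Real.logb_mul (ne_of_gt (hfull w)) (by positivity), Real.logb_inv]
        field_simp
        rw [nsmul_eq_mul, mul_div_cancel₀ _ hM0]; ring
      rw [Finset.sum_congr rfl (fun w _ => key w), Finset.sum_sub_distrib,
        ← Finset.sum_mul, hpW.2]
      ring
    rw [hF]
    simp only [h1, h2, hq, hj]
    ring
  -- pick a small positive δ
  have hopen : IsOpen {δ : ℝ | F δ < ε} := isOpen_lt hFcont continuous_const
  have hmem : (0:ℝ) ∈ {δ : ℝ | F δ < ε} := by simp [hF0, hε]
  obtain ⟨r, hr, hball⟩ := Metric.isOpen_iff.mp hopen 0 hmem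
  set δ : ℝ := min r 1 / 2 with hδdef
  have hδ0 : 0 < δ := by positivity
  have hδ1 : δ < 1 := by
    have : min r 1 ≤ 1 := min_le_right _ _
    simp only [hδdef]; linarith
  have hδr : δ < r := by
    have : min r 1 ≤ r := min_le_left _ _
    simp only [hδdef]; linarith
  have hδmem : F δ < ε := hball (by
    simp only [Metric.mem_ball, Real.dist_eq, sub_zero, abs_of_pos hδ0]
    exact hδr)
  have hδne : δ ≠ 0 := ne_of_gt hδ0
  refine ⟨Q δ, ?_, ?_, hδmem⟩
  · -- each row is a pmf
    intro w
    constructor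
    · intro x
      simp only [hQ]
      have h1 : 0 ≤ (1-δ)/M := by
        apply div_nonneg _ (le_of_lt hMpos); linarith
      split_ifs <;> nlinarith
    · simp only [hQ]
      rw [Finset.sum_add_distrib, Finset.sum_const, Finset.card_univ, Fintype.card_fin]
      simp only [mul_ite, mul_one, mul_zero, Finset.sum_ite_eq', Finset.mem_univ, if_true]
      field_simp
      rw [nsmul_eq_mul, mul_div_cancel₀ _ hM0]; ring
  · -- full rank
    set a : ℝ := (1-δ)/M with ha
    set A : Matrix (Fin M) (Fin M) ℝ :=
      Matrix.of fun x w : Fin M => a + δ * (if x = w then 1 else 0) with hA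
    set B : Matrix (Fin M) (Fin M) ℝ :=
      Matrix.of fun x w : Fin M => -(a/δ) + (1/δ) * (if x = w then 1 else 0) with hB
    have hAB : A * B = 1 := by
      ext i j
      simp only [Matrix.mul_apply, hA, hB, Matrix.of_apply, Matrix.one_apply]
      have key : ∀ k : Fin M,
          (a + δ * (if i = k then 1 else 0)) * (-(a/δ) + (1/δ) * (if k = j then 1 else 0))
          = -(a^2/δ) + (a/δ) * (if k = j then 1 else 0) + (-a) * (if i = k then 1 else 0)
            + (if i = k then 1 else 0) * (if k = j then 1 else 0) := by
        intro k; split_ifs <;> field_simp <;> (first | ring1 | (left; ring1))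
      rw [Finset.sum_congr rfl (fun k _ => key k)]
      simp only [Finset.sum_add_distrib, Finset.sum_const, Finset.card_univ, Fintype.card_fin,
        ← Finset.mul_sum, Finset.sum_ite_eq, Finset.sum_ite_eq', Finset.mem_univ, if_true,
        mul_one, nsmul_eq_mul]
      have hsum : ∑ k : Fin M, (if i = k then (1:ℝ) else 0) * (if k = j then 1 else 0)
          = if i = j then 1 else 0 := by
        simp [ite_and, mul_ite, mul_one, mul_zero, Finset.sum_ite_eq]
      rw [hsum]
      have hz : (M:ℝ) * -(a ^ 2 / δ) + a / δ + -a = 0 := by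
        rw [ha]; field_simp; ring
      split_ifs <;> linarith [hz]
    have : Invertible A := invertibleOfRightInverse A _ hAB
    have := Matrix.rank_of_isUnit A (isUnit_of_invertible A)
    simpa using this
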